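/- Let n ≥ 2 and let Θ, Θ̃ : ZMod n → ℝ be real signals such that F(Θ)_k ≠ 0 for every k ∈ ZMod n. Suppose z ∈ ℂ satisfies |z| = 1 and F(Θ̃)_k = z^k̄ · F(Θ)_k for every k ∈ ZMod n, where k̄ ∈ {0,…,n−1} is the integer representative of k. Then z^n = 1, and writing z = exp(2πi·h/n) with h ∈ {0,…,n−1}, one has Θ̃(g) = Θ(g + h) for all g ∈ ZMod n. (The realness of the signals forces the residual phase ambiguity of the bispectrum inversion to be a genuine cyclic translation.) -/

import Mathlib

open Finset

/-- The discrete Fourier transform of a signal `Θ : ZMod n → ℂ`: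
`F(Θ)_k = Σ_{g} Θ(g) · exp(−2πi·k̄·ḡ/n)`. -/
noncomputable def cyclicDFT (n : ℕ) [NeZero n] (Θ : ZMod n → ℂ) (k : ZMod n) : ℂ :=
  ∑ g : ZMod n,
    Θ g * Complex.exp (-(2 * (Real.pi : ℂ) * Complex.I * (k.val * g.val)) / n)

lemma cyclicDFT_eq_dft (n : ℕ) [NeZero n] (Θ : ZMod n → ℂ) (k : ZMod n) :
    cyclicDFT n Θ k = ZMod.dft Θ k := by
  rw [cyclicDFT, ZMod.dft_apply]
  refine Finset.sum_congr rfl fun g _ => ?_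
  rw [smul_eq_mul, mul_comm]
  congr 1
  have h1 : (-(g * k) : ZMod n) = ((-(g.val * k.val : ℤ) : ℤ) : ZMod n) := by
    push_cast
    rw [ZMod.natCast_val, ZMod.natCast_val, ZMod.cast_id, ZMod.cast_id]
  rw [h1, ZMod.stdAddChar_coe]
  congr 1
  push_cast
  ring

lemma conj_stdAddChar (n : ℕ) [NeZero n] (x : ZMod n) :
    (starRingEnd ℂ) (ZMod.stdAddChar x) = ZMod.stdAddChar (-x) := by
  rw [AddChar.map_neg_eq_inv]
  refine (Complex.inv_eq_conj ?_).symm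
  rw [ZMod.stdAddChar_apply]
  exact Circle.norm_coe _

lemma dft_translate (n : ℕ) [NeZero n] (Φ : ZMod n → ℂ) (t k : ZMod n) :
    ZMod.dft (fun g => Φ (g + t)) k = ZMod.stdAddChar (t * k) * ZMod.dft Φ k := by
  rw [ZMod.dft_apply, ZMod.dft_apply, Finset.mul_sum]
  refine Fintype.sum_equiv (Equiv.addRight t) _ _ fun g => ?_
  simp only [Equiv.coe_addRight, smul_eq_mul, add_sub_cancel_right]
  rw [← mul_assoc, ← AddChar.map_add_eq_mul]
  congr 2
  ring

lemma dft_real_conj (n : ℕ) [NeZero n] (Φ : ZMod n → ℝ) (k : ZMod n) :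
    ZMod.dft (fun g => (Φ g : ℂ)) (-k)
      = (starRingEnd ℂ) (ZMod.dft (fun g => (Φ g : ℂ)) k) := by
  rw [ZMod.dft_apply, ZMod.dft_apply, map_sum]
  refine Finset.sum_congr rfl fun g _ => ?_
  simp only [smul_eq_mul, map_mul, Complex.conj_ofReal, conj_stdAddChar]
  ring_nf

/-- The realness of the signals forces the residual phase ambiguity of the bispectrum
inversion to be a genuine cyclic translation: if `F(Θ')_k = z^k̄ · F(Θ)_k` with
`|z| = 1`, then `z` is an `n`-th root of unity, and writing `z = exp(2πi·h/n)` with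
`0 ≤ h < n`, the signal `Θ'` is the translate of `Θ` by `h`. -/
theorem bispectrum_phase_is_translation (n : ℕ) [NeZero n] (hn : 2 ≤ n)
    (Θ Θ' : ZMod n → ℝ)
    (hF : ∀ k : ZMod n, cyclicDFT n (fun g => (Θ g : ℂ)) k ≠ 0)
    (z : ℂ) (hz : ‖z‖ = 1)
    (hzk : ∀ k : ZMod n,
      cyclicDFT n (fun g => (Θ' g : ℂ)) k
        = z ^ k.val * cyclicDFT n (fun g => (Θ g : ℂ)) k) :
    z ^ n = 1 ∧
      ∀ h : ℕ, h < n → z = Complex.exp (2 * (Real.pi : ℂ) * Complex.I * h / n) →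
        ∀ g : ZMod n, Θ' g = Θ (g + (h : ZMod n)) := by
  constructor
  · -- z^n = 1
    obtain ⟨m, rfl⟩ : ∃ m, n = m + 1 := ⟨n - 1, by omega⟩
    have h1v : (1 : ZMod (m + 1)).val = 1 := by
      rw [ZMod.val_one_eq_one_mod]; exact Nat.mod_eq_of_lt (by omega)
    have hval : (-1 : ZMod (m + 1)).val = m := ZMod.val_neg_one m
    have hA := hF (-1)
    rw [cyclicDFT_eq_dft] at hA
    have e1 := dft_real_conj (m + 1) Θ' 1
    rw [← cyclicDFT_eq_dft, ← cyclicDFT_eq_dft, hzk, hzk, map_mul,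
      cyclicDFT_eq_dft, cyclicDFT_eq_dft, ← dft_real_conj, hval, h1v, pow_one] at e1
    have hzm : z ^ m = (starRingEnd ℂ) z := mul_right_cancel₀ hA e1
    have : z ^ (m + 1) = (starRingEnd ℂ) z * z := by rw [pow_succ, hzm]
    rw [this, mul_comm, Complex.mul_conj, Complex.normSq_eq_norm_sq, hz]
    norm_num
  · intro h hhn hze g
    have key : ∀ k : ZMod n, ZMod.dft (fun g => (Θ' g : ℂ)) k
        = ZMod.dft (fun g => (Θ (g + (h : ZMod n)) : ℂ)) k := by
      intro k
      rw [← cyclicDFT_eq_dft, hzk k, cyclicDFT_eq_dft,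
        dft_translate n (fun g => (Θ g : ℂ)) (h : ZMod n) k]
      congr 1
      have : ((h : ZMod n) * k) = (((h * k.val : ℕ) : ℤ) : ZMod n) := by
        push_cast
        rw [ZMod.natCast_val, ZMod.cast_id]
      rw [this, ZMod.stdAddChar_coe, hze, ← Complex.exp_nat_mul]
      congr 1
      push_cast
      ring
    have := ZMod.dft.injective (funext key)
    have := congrFun this g
    exact_mod_cast this
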